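/- Let F be 0-strongly regular on [0,U) with c = 0. Under the ε-difference constraint, if p_l*(ε) satisfies the first-order condition S(p_l*+ε) = p_l* f(p_l*), i.e., exp(-∫_{p_l*}^{p_l*+ε} h(t)dt) = p_l* h(p_l*), then p_l* h(p_l*) < 1/(1 + h(p_l*)·ε). -/
import Mathlib


open Set intervalIntegral

/-- Let `F` be 0-strongly regular on `[0, U)` with `c = 0`. Under the
`ε`-difference constraint, if `p_l*` satisfies the first-order condition
`exp(-∫_{p_l*}^{p_l*+ε} h(t) dt) = p_l*·h(p_l*)`, then
`p_l*·h(p_l*) < 1/(1 + h(p_l*)·ε)`. -/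
theorem foc_implies_plh_bound
    (U : ℝ) (hU : 0 < U)
    (f S h : ℝ → ℝ)
    (hfpos : ∀ v ∈ Ico 0 U, 0 < f v)
    (hSpos : ∀ v ∈ Ico 0 U, 0 < S v)
    (hh : ∀ v, h v = f v / S v)
    (hcont : ContinuousOn h (Ico 0 U))
    (hw : StrictMonoOn (fun v => v - 1 / h v) (Ico 0 U))
    (pl ε : ℝ) (hpl : 0 < pl) (hε : 0 < ε) (hplU : pl + ε < U)
    (hFOC : Real.exp (-∫ t in pl..(pl + ε), h t) = pl * h pl) :
    pl * h pl < 1 / (1 + h pl * ε) := by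
  have hplmem : pl ∈ Ico 0 U := ⟨hpl.le, by linarith⟩
  have hhpos : ∀ v ∈ Ico 0 U, 0 < h v := fun v hv => by
    rw [hh]; exact div_pos (hfpos v hv) (hSpos v hv)
  set H := h pl with hH
  have hHpos : 0 < H := hhpos pl hplmem
  have hsub : Icc pl (pl + ε) ⊆ Ico 0 U := fun x hx =>
    ⟨le_trans hpl.le hx.1, lt_of_le_of_lt hx.2 hplU⟩
  -- the comparison function
  set g : ℝ → ℝ := fun t => 1 / (t - pl + 1 / H) with hg
  have hdenpos : ∀ x ∈ Icc pl (pl + ε), 0 < x - pl + 1 / H := fun x hx => by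
    have := hx.1
    have : 0 < 1 / H := one_div_pos.mpr hHpos
    nlinarith [hx.1]
  -- pointwise strict inequality on Ioc
  have hlt : ∀ x ∈ Ioc pl (pl + ε), g x < h x := by
    intro x hx
    have hxmem : x ∈ Ico 0 U := hsub ⟨hx.1.le, hx.2⟩
    have hhx : 0 < h x := hhpos x hxmem
    have hwlt := hw hplmem hxmem hx.1
    simp only at hwlt
    have h1 : 1 / h x < x - pl + 1 / H := by dsimp [H]; linarith
    have hd : 0 < x - pl + 1 / H := hdenpos x ⟨hx.1.le, hx.2⟩
    rw [hg]
    dsimp only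
    rw [div_lt_iff₀ hd]
    rw [one_div, inv_lt_iff_one_lt_mul₀ hhx] at h1
    linarith [h1]
  -- continuity
  have hgc : ContinuousOn g (Icc pl (pl + ε)) := by
    apply ContinuousOn.div continuousOn_const
    · fun_prop
    · intro x hx; exact (hdenpos x hx).ne'
  have hhc : ContinuousOn h (Icc pl (pl + ε)) := hcont.mono hsub
  have hab : pl < pl + ε := by linarith
  -- strict integral inequality
  have hint : (∫ t in pl..(pl + ε), g t) < ∫ t in pl..(pl + ε), h t := by
    apply intervalIntegral.integral_lt_integral_of_continuousOn_of_le_of_exists_lt hab hgc hhc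
      (fun x hx => (hlt x hx).le)
    exact ⟨pl + ε, ⟨hab.le, le_refl _⟩, hlt (pl + ε) ⟨hab, le_refl _⟩⟩
  -- compute ∫ g = log (1 + H * ε)
  have hcomp : (∫ t in pl..(pl + ε), g t) = Real.log (1 + H * ε) := by
    have h1 : (∫ t in pl..(pl + ε), g t)
        = ∫ t in pl..(pl + ε), (fun x => 1 / x) (t - (pl - 1 / H)) := by
      apply intervalIntegral.integral_congr
      intro t ht
      simp only [hg]
      ring_nf
    rw [h1, intervalIntegral.integral_comp_sub_right (fun x => 1 / x) (pl - 1/H)]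
    have e1 : pl - (pl - 1 / H) = 1 / H := by ring
    have e2 : pl + ε - (pl - 1 / H) = ε + 1 / H := by ring
    rw [e1, e2]
    have h0 : (0:ℝ) ∉ Set.uIcc (1 / H) (ε + 1 / H) := by
      intro hmem
      have := hmem.1
      rcases le_total (1/H) (ε + 1/H) with hc | hc
      · rw [Set.uIcc_of_le hc] at hmem
        have := hmem.1
        have : 0 < 1 / H := one_div_pos.mpr hHpos
        linarith
      · rw [Set.uIcc_of_ge hc] at hmem
        have := hmem.1
        have h01 : 0 < 1 / H := one_div_pos.mpr hHpos
        linarith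
    rw [integral_one_div h0]
    congr 1
    field_simp
    ring
  have hlog : Real.log (1 + H * ε) < ∫ t in pl..(pl + ε), h t := hcomp ▸ hint
  have h1He : 0 < 1 + H * ε := by positivity
  calc pl * h pl = Real.exp (-∫ t in pl..(pl + ε), h t) := hFOC.symm
    _ < Real.exp (-Real.log (1 + H * ε)) := by
        apply Real.exp_lt_exp.mpr; linarith
    _ = 1 / (1 + h pl * ε) := by
        rw [Real.exp_neg, Real.exp_log h1He, one_div]
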